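/- Let m ≥ 1 and let V' = { S ∈ M_{2m}(ℂ) : S = [[Z, W],[-W̄, Z̄]] for some Z, W ∈ M_m(ℂ), and Sᴴ = S } be the real vector space of Hermitian quaternion-type complex 2m×2m matrices (of real dimension m(2m-1)). For S ∈ V', the map T ↦ S·T·S maps V' to itself, and its determinant as an ℝ-linear endomorphism of V' equals (det S)^{2m-1} (note det S is real and nonnegative for S ∈ V'). -/

import Mathlib

set_option linter.unnecessarySeqFocus false
set_option linter.unusedSectionVars false
set_option linter.unusedVariables false


open Matrix

/-- The real subspace of complex `2m × 2m` matrices of quaternion type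
`[[Z, W], [-W̄, Z̄]]`. -/
noncomputable def quatMatrices (m : ℕ) :
    Submodule ℝ (Matrix (Fin m ⊕ Fin m) (Fin m ⊕ Fin m) ℂ) where
  carrier := {S | ∃ Z W : Matrix (Fin m) (Fin m) ℂ,
    S = Matrix.fromBlocks Z W (-(W.map (starRingEnd ℂ))) (Z.map (starRingEnd ℂ))}
  add_mem' := by
    rintro a b ⟨Z1, W1, rfl⟩ ⟨Z2, W2, rfl⟩
    refine ⟨Z1 + Z2, W1 + W2, ?_⟩
    rw [Matrix.fromBlocks_add,
      Matrix.map_add (starRingEnd ℂ) (fun a b => by simp) Z1 Z2,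
      Matrix.map_add (starRingEnd ℂ) (fun a b => by simp) W1 W2, neg_add]
  zero_mem' := by
    refine ⟨0, 0, ?_⟩
    ext i j
    cases i <;> cases j <;> simp
  smul_mem' := by
    rintro c a ⟨Z, W, rfl⟩
    refine ⟨c • Z, c • W, ?_⟩
    ext i j
    cases i <;> cases j <;>
      simp [Matrix.smul_apply, Matrix.map_apply, Matrix.neg_apply, Complex.real_smul,
        _root_.map_mul, Complex.conj_ofReal]


/-- The real subspace of Hermitian complex matrices (over an arbitrary index type). -/
noncomputable def hermMatrices' (n : Type*) : Submodule ℝ (Matrix n n ℂ) where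
  carrier := {X | Xᴴ = X}
  add_mem' := by
    intro a b ha hb
    simp only [Set.mem_setOf_eq] at *
    rw [Matrix.conjTranspose_add, ha, hb]
  zero_mem' := Matrix.conjTranspose_zero
  smul_mem' := by
    intro c a ha
    simp only [Set.mem_setOf_eq] at *
    rw [Matrix.conjTranspose_smul, star_trivial, ha]

namespace Stmt15Aux

variable {m : ℕ}

/-- entrywise conjugation -/
noncomputable def Cj {k l : Type*} (A : Matrix k l ℂ) : Matrix k l ℂ :=
  A.map (starRingEnd ℂ)

lemma Cj_mul {k l o : Type*} [Fintype l] (A : Matrix k l ℂ) (B : Matrix l o ℂ) :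
    Cj (A * B) = Cj A * Cj B := Matrix.map_mul

lemma Cj_add {k l : Type*} (A B : Matrix k l ℂ) : Cj (A + B) = Cj A + Cj B := by
  ext i j; simp [Cj]

lemma Cj_Cj {k l : Type*} (A : Matrix k l ℂ) : Cj (Cj A) = A := by
  ext i j; simp [Cj]

lemma Cj_transpose {k l : Type*} (A : Matrix k l ℂ) : Cj Aᵀ = (Cj A)ᵀ := by
  ext i j; simp [Cj]

lemma conjTranspose_eq_Cj_transpose {k l : Type*} (A : Matrix k l ℂ) :
    Aᴴ = (Cj A)ᵀ := rfl

def Jmat (m : ℕ) : Matrix (Fin m ⊕ Fin m) (Fin m ⊕ Fin m) ℂ :=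
  Matrix.fromBlocks 0 1 (-1) 0

lemma Cj_Jmat : Cj (Jmat m) = Jmat m := by
  ext i j
  cases i <;> cases j <;>
    simp [Cj, Jmat, Matrix.map_apply, Matrix.one_apply, apply_ite]

lemma Jmat_mul_Jmat : Jmat m * Jmat m = -1 := by
  ext i j
  cases i <;> cases j <;>
    simp [Jmat, Matrix.fromBlocks_multiply, Matrix.one_apply]

lemma Jmat_transpose : (Jmat m)ᵀ = -Jmat m := by
  ext i j
  cases i <;> cases j <;>
    simp [Jmat, Matrix.fromBlocks_transpose, Matrix.one_apply, eq_comm]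

lemma mem_quat_iff (S : Matrix (Fin m ⊕ Fin m) (Fin m ⊕ Fin m) ℂ) :
    S ∈ quatMatrices m ↔ S * Jmat m = Jmat m * Cj S := by
  constructor
  · rintro ⟨Z, W, rfl⟩
    show _ = _ * Cj (Matrix.fromBlocks Z W _ _)
    simp only [Jmat, Cj, Matrix.fromBlocks_map, Matrix.fromBlocks_multiply]
    simp [Matrix.fromBlocks_multiply]
    constructor <;> (ext i j; simp)
  · intro h
    rw [← Matrix.fromBlocks_toBlocks S] at h
    set A := S.toBlocks₁₁ with hA
    set B := S.toBlocks₁₂ with hB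
    set C := S.toBlocks₂₁ with hCdef
    set D := S.toBlocks₂₂ with hDdef
    simp only [Jmat, Cj, Matrix.fromBlocks_map, Matrix.fromBlocks_multiply, Matrix.mul_zero,
      Matrix.zero_mul, Matrix.mul_one, Matrix.one_mul, Matrix.mul_neg, Matrix.neg_mul,
      zero_add, add_zero] at h
    have h21 := congrArg Matrix.toBlocks₂₁ h
    have h22 := congrArg Matrix.toBlocks₂₂ h
    simp only [Matrix.toBlocks_fromBlocks₂₁, Matrix.toBlocks_fromBlocks₂₂] at h21 h22
    refine ⟨A, B, ?_⟩
    have hC : C = -(B.map (starRingEnd ℂ)) := h22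
    have hD : D = A.map (starRingEnd ℂ) := by
      have h3 := neg_injective h21
      ext i j
      exact congrFun (congrFun h3 i) j
    rw [← Matrix.fromBlocks_toBlocks S, ← hA, ← hB, ← hCdef, ← hDdef, hC, hD]



variable {N : ℕ}

/-- Skew-symmetric complex matrices. -/
noncomputable def Skew (n : Type*) : Submodule ℂ (Matrix n n ℂ) where
  carrier := {A | Aᵀ = -A}
  add_mem' := by
    intro a b ha hb
    simp only [Set.mem_setOf_eq] at *
    rw [Matrix.transpose_add, ha, hb, neg_add]
  zero_mem' := by simp
  smul_mem' := by
    intro c a ha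
    simp only [Set.mem_setOf_eq] at *
    rw [Matrix.transpose_smul, ha, smul_neg]

lemma mem_Skew_iff {n : Type*} (A : Matrix n n ℂ) : A ∈ Skew n ↔ Aᵀ = -A := Iff.rfl

/-- Index type for the basis of skew matrices. -/
abbrev SkewIdx (N : ℕ) := {p : Fin N × Fin N // p.1 < p.2}

noncomputable def skewElt (p : SkewIdx N) : Matrix (Fin N) (Fin N) ℂ :=
  Matrix.single p.1.1 p.1.2 1 - Matrix.single p.1.2 p.1.1 1

lemma skewElt_apply (p : SkewIdx N) (a b : Fin N) :
    skewElt p a b =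
      if (p : Fin N × Fin N) = (a, b) then 1
      else if (p : Fin N × Fin N) = (b, a) then -1 else 0 := by
  rcases p with ⟨⟨i, j⟩, hij⟩
  replace hij : i < j := hij
  simp only [skewElt, Matrix.sub_apply, Matrix.single, Matrix.of_apply, Prod.mk.injEq]
  split_ifs <;> (try (exfalso; omega)) <;> ring

lemma skewElt_mem (p : SkewIdx N) : skewElt p ∈ Skew (Fin N) := by
  rw [mem_Skew_iff]
  ext a b
  simp only [Matrix.transpose_apply, Matrix.neg_apply, skewElt_apply]
  rcases p with ⟨⟨i, j⟩, hij⟩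
  replace hij : i < j := hij
  simp only [Prod.mk.injEq]
  split_ifs <;> (try (exfalso; omega)) <;> ring

/-- The basis vectors inside the submodule. -/
noncomputable def skewVec (p : SkewIdx N) : Skew (Fin N) := ⟨skewElt p, skewElt_mem p⟩

lemma skew_eq_sum (A : Matrix (Fin N) (Fin N) ℂ) (hA : A ∈ Skew (Fin N)) :
    A = ∑ p : SkewIdx N, A (p : Fin N × Fin N).1 (p : Fin N × Fin N).2 • skewElt p := by
  ext a b
  rw [Matrix.sum_apply]
  simp only [Matrix.smul_apply, skewElt_apply, smul_eq_mul]
  rcases lt_trichotomy a b with h | h | h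
  · rw [Finset.sum_eq_single (⟨(a, b), h⟩ : SkewIdx N)]
    · have he : ((⟨(a, b), h⟩ : SkewIdx N) : Fin N × Fin N) = (a, b) := rfl
      rw [he, if_pos rfl, mul_one]
    · rintro ⟨⟨i, j⟩, hij⟩ - hne
      replace hij : i < j := hij
      split_ifs with h1 h2
      · exact absurd (Subtype.ext h1) hne
      · rw [Prod.mk.injEq] at h2
        exfalso; omega
      · ring
    · intro h'; exact absurd (Finset.mem_univ _) h'
  · subst h
    have : A a a = 0 := by
      have := congrFun (congrFun hA a) a
      simp only [Matrix.transpose_apply, Matrix.neg_apply] at this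
      linear_combination this / 2
    rw [this]
    symm
    apply Finset.sum_eq_zero
    rintro ⟨⟨i, j⟩, hij⟩ -
    replace hij : i < j := hij
    simp only [Prod.mk.injEq]
    split_ifs <;> (try (exfalso; omega)) <;> ring
  · have hab : A a b = -A b a := by
      have := congrFun (congrFun hA b) a
      simpa using this
    rw [Finset.sum_eq_single (⟨(b, a), h⟩ : SkewIdx N)]
    · have he : ((⟨(b, a), h⟩ : SkewIdx N) : Fin N × Fin N) = (b, a) := rfl
      rw [he, if_neg (by simp [Prod.ext_iff]; omega), if_pos rfl, hab]
      ring
    · rintro ⟨⟨i, j⟩, hij⟩ - hne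
      replace hij : i < j := hij
      split_ifs with h1 h2
      · rw [Prod.mk.injEq] at h1
        exfalso; omega
      · exact absurd (Subtype.ext h2) hne
      · ring
    · intro h'; exact absurd (Finset.mem_univ _) h'

lemma skewVec_linearIndependent : LinearIndependent ℂ (skewVec (N := N)) := by
  rw [Fintype.linearIndependent_iff]
  intro g hg p
  obtain ⟨⟨i, j⟩, hij⟩ := p
  replace hij : i < j := hij
  have h0 : (∑ q : SkewIdx N, g q • skewElt q) = 0 := by
    have := congrArg (Submodule.subtype _) hg
    simpa [skewVec, Submodule.coe_sum] using this
  have := congrFun (congrFun h0 i) j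
  rw [Matrix.sum_apply] at this
  simp only [Matrix.zero_apply, Matrix.smul_apply, skewElt_apply, smul_eq_mul] at this
  rw [Finset.sum_eq_single (⟨(i, j), hij⟩ : SkewIdx N)] at this
  · have he : ((⟨(i, j), hij⟩ : SkewIdx N) : Fin N × Fin N) = (i, j) := rfl
    rw [he, if_pos rfl, mul_one] at this
    simpa using this
  · rintro ⟨⟨a, b⟩, hab⟩ - hne
    replace hab : a < b := hab
    split_ifs with h1 h2
    · exact absurd (Subtype.ext h1) hne
    · rw [Prod.mk.injEq] at h2
      exfalso; omega
    · ring
  · intro h'; exact absurd (Finset.mem_univ _) h'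

noncomputable def skewBasis (N : ℕ) : Module.Basis (SkewIdx N) ℂ (Skew (Fin N)) :=
  Module.Basis.mk skewVec_linearIndependent (by
    rintro ⟨A, hA⟩ -
    rw [Submodule.mem_span_range_iff_exists_fun]
    refine ⟨fun p => A (p : Fin N × Fin N).1 (p : Fin N × Fin N).2, ?_⟩
    apply Subtype.ext
    rw [Submodule.coe_sum]
    simp only [skewVec, SetLike.mk_smul_mk]
    exact (skew_eq_sum A hA).symm)


section CongrMap2


variable {n : Type*} [Fintype n] [DecidableEq n]

/-- `A ↦ X A Xᵀ` as a linear endomorphism of skew matrices. -/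
noncomputable def congrMap (X : Matrix n n ℂ) : Skew n →ₗ[ℂ] Skew n where
  toFun A := ⟨X * A.1 * Xᵀ, by
    have hA : (A.1)ᵀ = -A.1 := A.2
    show (X * A.1 * Xᵀ)ᵀ = -(X * A.1 * Xᵀ)
    rw [Matrix.transpose_mul, Matrix.transpose_mul, Matrix.transpose_transpose, hA]
    simp [Matrix.mul_assoc]⟩
  map_add' A B := by
    apply Subtype.ext
    show X * (A.1 + B.1) * Xᵀ = X * A.1 * Xᵀ + X * B.1 * Xᵀ
    rw [Matrix.mul_add, Matrix.add_mul]
  map_smul' c A := by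
    apply Subtype.ext
    show X * (c • A.1) * Xᵀ = c • (X * A.1 * Xᵀ)
    rw [Matrix.mul_smul, Matrix.smul_mul]

lemma congrMap_apply (X : Matrix n n ℂ) (A : Skew n) :
    (congrMap X A : Matrix n n ℂ) = X * A.1 * Xᵀ := rfl

lemma congrMap_mul (X Y : Matrix n n ℂ) :
    congrMap (X * Y) = congrMap X ∘ₗ congrMap Y := by
  apply LinearMap.ext
  intro A
  apply Subtype.ext
  show (X * Y) * A.1 * (X * Y)ᵀ = X * (Y * A.1 * Yᵀ) * Xᵀ
  rw [Matrix.transpose_mul]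
  noncomm_ring

lemma congrMap_one : congrMap (1 : Matrix n n ℂ) = LinearMap.id := by
  apply LinearMap.ext
  intro A
  apply Subtype.ext
  show (1 : Matrix n n ℂ) * A.1 * (1 : Matrix n n ℂ)ᵀ = A.1
  simp

lemma det_congrMap_mul (X Y : Matrix n n ℂ) :
    LinearMap.det (congrMap (X * Y)) =
      LinearMap.det (congrMap X) * LinearMap.det (congrMap Y) := by
  rw [congrMap_mul, LinearMap.det_comp]

end CongrMap2


section DiagDet

variable {N : ℕ}

lemma congrMap_diagonal_apply (d : Fin N → ℂ) (p : SkewIdx N) :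
    congrMap (Matrix.diagonal d) (skewVec p) =
      (d (p : Fin N × Fin N).1 * d (p : Fin N × Fin N).2) • skewVec p := by
  obtain ⟨⟨i, j⟩, hij⟩ := p
  apply Subtype.ext
  show Matrix.diagonal d * skewElt ⟨(i, j), hij⟩ * (Matrix.diagonal d)ᵀ = _
  rw [Matrix.diagonal_transpose]
  have hcoe : ((⟨(i, j), hij⟩ : SkewIdx N) : Fin N × Fin N) = (i, j) := rfl
  ext a b
  rw [Matrix.mul_diagonal, Matrix.diagonal_mul]
  show d a * skewElt ⟨(i, j), hij⟩ a b * d b = ((d i * d j) • skewElt ⟨(i, j), hij⟩) a b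
  rw [Matrix.smul_apply, skewElt_apply, hcoe, smul_eq_mul]
  split_ifs with h1 h2
  · rw [Prod.mk.injEq] at h1
    obtain ⟨rfl, rfl⟩ := h1
    ring
  · rw [Prod.mk.injEq] at h2
    obtain ⟨rfl, rfl⟩ := h2
    ring
  · ring

lemma toMatrix_congrMap_diagonal (d : Fin N → ℂ) :
    LinearMap.toMatrix (skewBasis N) (skewBasis N) (congrMap (Matrix.diagonal d)) =
      Matrix.diagonal (fun p : SkewIdx N => d (p : Fin N × Fin N).1 * d (p : Fin N × Fin N).2) := by
  ext p q
  rw [LinearMap.toMatrix_apply]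
  rw [show (skewBasis N) q = skewVec q from Module.Basis.mk_apply _ _ _]
  rw [congrMap_diagonal_apply]
  have : (skewBasis N).repr ((d (q : Fin N × Fin N).1 * d (q : Fin N × Fin N).2) • skewVec q)
      = (d (q : Fin N × Fin N).1 * d (q : Fin N × Fin N).2) •
        (skewBasis N).repr (skewVec q) := by
    rw [_root_.map_smul]
  rw [this]
  rw [show skewVec q = (skewBasis N) q from (Module.Basis.mk_apply _ _ _).symm, Module.Basis.repr_self]
  rw [Matrix.diagonal_apply]
  rw [Finsupp.smul_apply, Finsupp.single_apply, smul_ite, smul_eq_mul, mul_one, smul_zero]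
  by_cases h : p = q
  · subst h; simp
  · rw [if_neg (Ne.symm h), if_neg h]

lemma prod_skewIdx (d : Fin N → ℂ) :
    (∏ p : SkewIdx N, (d (p : Fin N × Fin N).1 * d (p : Fin N × Fin N).2)) =
      (∏ i, d i) ^ (N - 1) := by
  classical
  have h1 : (∏ p : SkewIdx N, (d (p : Fin N × Fin N).1 * d (p : Fin N × Fin N).2)) =
      ∏ x ∈ Finset.univ.filter (fun p : Fin N × Fin N => p.1 < p.2), (d x.1 * d x.2) :=
    (Finset.prod_subtype (Finset.univ.filter (fun p : Fin N × Fin N => p.1 < p.2))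
      (p := fun p : Fin N × Fin N => p.1 < p.2) (fun x => by simp)
      (fun x => d x.1 * d x.2)).symm
  have h2 : ∏ x ∈ Finset.univ.filter (fun p : Fin N × Fin N => p.1 < p.2), d x.2 =
      ∏ x ∈ Finset.univ.filter (fun p : Fin N × Fin N => p.2 < p.1), d x.1 := by
    apply Finset.prod_bij (fun x _ => Prod.swap x)
    · intro a ha
      simp only [Finset.mem_filter, Finset.mem_univ, true_and] at ha ⊢
      simpa using ha
    · intro a _ b _ hab
      exact Prod.swap_injective hab
    · intro b hb
      refine ⟨Prod.swap b, ?_, (Prod.swap_swap b).symm⟩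
      simp only [Finset.mem_filter, Finset.mem_univ, true_and] at hb ⊢
      simpa using hb
    · intro a _
      simp
  have h3 : (Finset.univ.filter (fun p : Fin N × Fin N => p.1 ≠ p.2)) =
      (Finset.univ.filter (fun p : Fin N × Fin N => p.1 < p.2)) ∪
      (Finset.univ.filter (fun p : Fin N × Fin N => p.2 < p.1)) := by
    ext x
    simp only [Finset.mem_filter, Finset.mem_union, Finset.mem_univ, true_and]
    constructor
    · intro h; exact lt_or_gt_of_ne h
    · rintro (h | h) <;> omega
  have hdisj : Disjoint (Finset.univ.filter (fun p : Fin N × Fin N => p.1 < p.2))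
      (Finset.univ.filter (fun p : Fin N × Fin N => p.2 < p.1)) := by
    rw [Finset.disjoint_filter]
    intro x _ h1x
    omega
  have h4 : ∏ x ∈ Finset.univ.filter (fun p : Fin N × Fin N => p.1 ≠ p.2), d x.1 =
      (∏ x ∈ Finset.univ.filter (fun p : Fin N × Fin N => p.1 < p.2), d x.1) *
      (∏ x ∈ Finset.univ.filter (fun p : Fin N × Fin N => p.2 < p.1), d x.1) := by
    rw [h3, Finset.prod_union hdisj]
  have h5 : ∏ x ∈ Finset.univ.filter (fun p : Fin N × Fin N => p.1 ≠ p.2), d x.1 =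
      (∏ i, d i) ^ (N - 1) := by
    rw [Finset.prod_filter]
    have : (Finset.univ : Finset (Fin N × Fin N)) = Finset.univ ×ˢ Finset.univ := by
      rw [Finset.univ_product_univ]
    rw [this, Finset.prod_product]
    have inner : ∀ a : Fin N, (∏ b : Fin N, if (a, b).1 ≠ (a, b).2 then d (a, b).1 else 1)
        = d a ^ (N - 1) := by
      intro a
      have : (∏ b : Fin N, if (a, b).1 ≠ (a, b).2 then d (a, b).1 else 1)
          = ∏ b ∈ Finset.univ.filter (fun b : Fin N => a ≠ b), d a := by
        rw [Finset.prod_filter]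
      rw [this, Finset.prod_const]
      congr 1
      have : Finset.univ.filter (fun b : Fin N => a ≠ b) = Finset.univ.erase a := by
        ext x
        simp [eq_comm, Finset.mem_erase, ne_comm]
      rw [this, Finset.card_erase_of_mem (Finset.mem_univ a), Finset.card_univ, Fintype.card_fin]
    calc (∏ a : Fin N, ∏ b : Fin N, if (a, b).1 ≠ (a, b).2 then d (a, b).1 else 1)
        = ∏ a : Fin N, d a ^ (N - 1) := Finset.prod_congr rfl fun a _ => inner a
      _ = (∏ i, d i) ^ (N - 1) := by rw [Finset.prod_pow]
  rw [h1, Finset.prod_mul_distrib, h2, ← h4, h5]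

lemma det_congrMap_diagonal (d : Fin N → ℂ) :
    LinearMap.det (congrMap (Matrix.diagonal d)) = (∏ i, d i) ^ (N - 1) := by
  rw [← LinearMap.det_toMatrix (skewBasis N), toMatrix_congrMap_diagonal,
    Matrix.det_diagonal, prod_skewIdx]

end DiagDet

section Herm

variable {N : ℕ}

lemma det_congrMap_herm (X : Matrix (Fin N) (Fin N) ℂ) (hX : X.IsHermitian) :
    LinearMap.det (congrMap X) = X.det ^ (N - 1) := by
  have spec := hX.spectral_theorem
  rw [Unitary.conjStarAlgAut_apply] at spec
  set U : Matrix (Fin N) (Fin N) ℂ := (hX.eigenvectorUnitary : Matrix (Fin N) (Fin N) ℂ)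
    with hUdef
  set D : Matrix (Fin N) (Fin N) ℂ :=
    Matrix.diagonal (RCLike.ofReal ∘ hX.eigenvalues) with hDdef
  have hU1 : U * star U = 1 := Matrix.mem_unitaryGroup_iff.mp hX.eigenvectorUnitary.2
  have hdetX : X.det = D.det := by
    rw [spec, Matrix.det_mul, Matrix.det_mul]
    have : U.det * (star U).det = 1 := by rw [← Matrix.det_mul, hU1, Matrix.det_one]
    calc U.det * D.det * (star U).det = D.det * (U.det * (star U).det) := by ring
      _ = D.det := by rw [this, mul_one]
  have hUU : LinearMap.det (congrMap U) * LinearMap.det (congrMap (star U)) = 1 := by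
    rw [← det_congrMap_mul, hU1, congrMap_one, LinearMap.det_id]
  have hφ : LinearMap.det (congrMap X) = LinearMap.det (congrMap D) := by
    rw [spec, det_congrMap_mul, det_congrMap_mul]
    calc LinearMap.det (congrMap U) * LinearMap.det (congrMap D) *
          LinearMap.det (congrMap (star U))
        = LinearMap.det (congrMap D) *
          (LinearMap.det (congrMap U) * LinearMap.det (congrMap (star U))) := by ring
      _ = LinearMap.det (congrMap D) := by rw [hUU, mul_one]
  rw [hφ, hdetX, hDdef, det_congrMap_diagonal, Matrix.det_diagonal]

end Herm

section Reindex

variable {n : Type*} [Fintype n] [DecidableEq n] {N : ℕ}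

noncomputable def skewReindex (e : n ≃ Fin N) : Skew n ≃ₗ[ℂ] Skew (Fin N) where
  toFun A := ⟨Matrix.reindex e e A.1, by
    have hA : (A.1)ᵀ = -A.1 := A.2
    show (Matrix.reindex e e A.1)ᵀ = -(Matrix.reindex e e A.1)
    rw [Matrix.transpose_reindex, hA]
    ext a b
    simp⟩
  invFun B := ⟨Matrix.reindex e.symm e.symm B.1, by
    have hB : (B.1)ᵀ = -B.1 := B.2
    show (Matrix.reindex e.symm e.symm B.1)ᵀ = -(Matrix.reindex e.symm e.symm B.1)
    rw [Matrix.transpose_reindex, hB]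
    ext a b
    simp⟩
  map_add' A B := by
    apply Subtype.ext; show Matrix.reindex e e (A.1 + B.1) = _
    ext a b; simp
  map_smul' c A := by
    apply Subtype.ext; show Matrix.reindex e e (c • A.1) = _
    ext a b; simp
  left_inv A := by apply Subtype.ext; show Matrix.reindex e.symm e.symm (Matrix.reindex e e A.1) = _; simp
  right_inv B := by apply Subtype.ext; show Matrix.reindex e e (Matrix.reindex e.symm e.symm B.1) = _; simp

lemma skewReindex_congrMap (e : n ≃ Fin N) (X : Matrix n n ℂ) :
    (skewReindex e).toLinearMap ∘ₗ congrMap X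
      = congrMap (Matrix.reindex e e X) ∘ₗ (skewReindex e).toLinearMap := by
  apply LinearMap.ext
  intro A
  apply Subtype.ext
  show Matrix.reindex e e (X * A.1 * Xᵀ)
      = Matrix.reindex e e X * Matrix.reindex e e A.1 * (Matrix.reindex e e X)ᵀ
  rw [Matrix.transpose_reindex]
  simp only [Matrix.reindex_apply, Matrix.submatrix_mul_equiv]

lemma det_congrMap_reindex (e : n ≃ Fin N) (X : Matrix n n ℂ) :
    LinearMap.det (congrMap X) = LinearMap.det (congrMap (Matrix.reindex e e X)) := by
  have h : congrMap (Matrix.reindex e e X)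
      = (skewReindex e : Skew n →ₗ[ℂ] Skew (Fin N)) ∘ₗ congrMap X ∘ₗ
        ((skewReindex e).symm : Skew (Fin N) →ₗ[ℂ] Skew n) := by
    rw [← LinearMap.comp_assoc, skewReindex_congrMap, LinearMap.comp_assoc]
    have : (skewReindex e).toLinearMap ∘ₗ ((skewReindex e).symm : Skew (Fin N) →ₗ[ℂ] Skew n)
        = LinearMap.id := by
      apply LinearMap.ext; intro A; simp
    rw [this, LinearMap.comp_id]
  rw [h, LinearMap.det_conj]

/-- Determinant of `A ↦ X A Xᵀ` on skew matrices for Hermitian `X`. -/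
lemma det_congrMap_of_herm (e : n ≃ Fin N) (X : Matrix n n ℂ) (hX : X.IsHermitian) :
    LinearMap.det (congrMap X) = X.det ^ (N - 1) := by
  rw [det_congrMap_reindex e X, det_congrMap_herm _ ?_, Matrix.det_reindex_self]
  rw [Matrix.IsHermitian, Matrix.conjTranspose_reindex, hX]

end Reindex

section VStuff

variable {m : ℕ}

lemma mem_herm_iff {k : Type*} (S : Matrix k k ℂ) : S ∈ hermMatrices' k ↔ Sᴴ = S := Iff.rfl

lemma Cj_of_herm {k : Type*} {S : Matrix k k ℂ} (h : Sᴴ = S) : Cj S = Sᵀ := by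
  have h2 := congrArg Matrix.transpose h
  rw [conjTranspose_eq_Cj_transpose, Matrix.transpose_transpose] at h2
  exact h2

lemma memV_quat {S : Matrix (Fin m ⊕ Fin m) (Fin m ⊕ Fin m) ℂ}
    (hS : S ∈ quatMatrices m ⊓ hermMatrices' (Fin m ⊕ Fin m)) :
    S * Jmat m = Jmat m * Cj S :=
  (mem_quat_iff S).mp (Submodule.mem_inf.mp hS).1

lemma memV_herm {S : Matrix (Fin m ⊕ Fin m) (Fin m ⊕ Fin m) ℂ}
    (hS : S ∈ quatMatrices m ⊓ hermMatrices' (Fin m ⊕ Fin m)) :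
    Sᴴ = S := (Submodule.mem_inf.mp hS).2

lemma memV_mulJ {S : Matrix (Fin m ⊕ Fin m) (Fin m ⊕ Fin m) ℂ}
    (hS : S ∈ quatMatrices m ⊓ hermMatrices' (Fin m ⊕ Fin m)) :
    S * Jmat m = Jmat m * Sᵀ := by
  rw [memV_quat hS, Cj_of_herm (memV_herm hS)]

lemma closure {S T : Matrix (Fin m ⊕ Fin m) (Fin m ⊕ Fin m) ℂ}
    (hS : S ∈ quatMatrices m ⊓ hermMatrices' (Fin m ⊕ Fin m))
    (hT : T ∈ quatMatrices m ⊓ hermMatrices' (Fin m ⊕ Fin m)) :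
    S * T * S ∈ quatMatrices m ⊓ hermMatrices' (Fin m ⊕ Fin m) := by
  refine Submodule.mem_inf.mpr ⟨(mem_quat_iff _).mpr ?_, ?_⟩
  · rw [Cj_mul, Cj_mul]
    simp only [Matrix.mul_assoc]
    rw [memV_quat hS, ← Matrix.mul_assoc T, memV_quat hT, Matrix.mul_assoc,
      ← Matrix.mul_assoc S, memV_quat hS, Matrix.mul_assoc]
  · rw [mem_herm_iff, Matrix.conjTranspose_mul, Matrix.conjTranspose_mul,
      memV_herm hS, memV_herm hT, Matrix.mul_assoc]

/-- antilinear involution whose fixed points (within skew matrices) are `V·J`. -/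
noncomputable def tau (m : ℕ) (A : Matrix (Fin m ⊕ Fin m) (Fin m ⊕ Fin m) ℂ) :
    Matrix (Fin m ⊕ Fin m) (Fin m ⊕ Fin m) ℂ :=
  Jmat m * Aᴴ * Jmat m

lemma Jmat_conjTranspose : (Jmat m)ᴴ = -Jmat m := by
  rw [conjTranspose_eq_Cj_transpose, Cj_Jmat, Jmat_transpose]

lemma tau_add (A B : Matrix (Fin m ⊕ Fin m) (Fin m ⊕ Fin m) ℂ) :
    tau m (A + B) = tau m A + tau m B := by
  simp [tau, Matrix.conjTranspose_add, Matrix.mul_add, Matrix.add_mul]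

lemma tau_smul (c : ℂ) (A : Matrix (Fin m ⊕ Fin m) (Fin m ⊕ Fin m) ℂ) :
    tau m (c • A) = (starRingEnd ℂ) c • tau m A := by
  simp [tau, Matrix.conjTranspose_smul, Matrix.mul_smul, Matrix.smul_mul]

lemma tau_tau (A : Matrix (Fin m ⊕ Fin m) (Fin m ⊕ Fin m) ℂ) : tau m (tau m A) = A := by
  unfold tau
  rw [Matrix.conjTranspose_mul, Matrix.conjTranspose_mul, Jmat_conjTranspose,
    Matrix.conjTranspose_conjTranspose]
  calc Jmat m * (-Jmat m * (A * -Jmat m)) * Jmat m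
      = (Jmat m * Jmat m) * A * (Jmat m * Jmat m) := by noncomm_ring
    _ = A := by rw [Jmat_mul_Jmat]; noncomm_ring

lemma tau_skew {A : Matrix (Fin m ⊕ Fin m) (Fin m ⊕ Fin m) ℂ}
    (hA : A ∈ Skew (Fin m ⊕ Fin m)) : tau m A ∈ Skew (Fin m ⊕ Fin m) := by
  have hA' : Aᵀ = -A := hA
  show (tau m A)ᵀ = -tau m A
  unfold tau
  rw [Matrix.transpose_mul, Matrix.transpose_mul, Jmat_transpose]
  have hAH : Aᴴ = -Cj A := by
    rw [conjTranspose_eq_Cj_transpose, ← Cj_transpose, hA']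
    ext i j; simp [Cj]
  have hAHT : (Aᴴ)ᵀ = Cj A := by
    rw [conjTranspose_eq_Cj_transpose, Matrix.transpose_transpose]
  rw [hAHT, hAH]
  noncomm_ring

lemma tau_fixed_of_memV {T : Matrix (Fin m ⊕ Fin m) (Fin m ⊕ Fin m) ℂ}
    (hT : T ∈ quatMatrices m ⊓ hermMatrices' (Fin m ⊕ Fin m)) :
    tau m (T * Jmat m) = T * Jmat m := by
  unfold tau
  rw [Matrix.conjTranspose_mul, Jmat_conjTranspose, memV_herm hT]
  calc Jmat m * (-Jmat m * T) * Jmat m = -((Jmat m * Jmat m) * (T * Jmat m)) := by noncomm_ring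
    _ = T * Jmat m := by rw [Jmat_mul_Jmat]; noncomm_ring

lemma memV_skew {T : Matrix (Fin m ⊕ Fin m) (Fin m ⊕ Fin m) ℂ}
    (hT : T ∈ quatMatrices m ⊓ hermMatrices' (Fin m ⊕ Fin m)) :
    T * Jmat m ∈ Skew (Fin m ⊕ Fin m) := by
  show (T * Jmat m)ᵀ = -(T * Jmat m)
  rw [Matrix.transpose_mul, Jmat_transpose, ← Cj_of_herm (memV_herm hT)]
  calc -Jmat m * Cj T = -(Jmat m * Cj T) := by noncomm_ring
    _ = -(T * Jmat m) := by rw [← memV_quat hT]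

lemma memV_of_tau_fixed {A : Matrix (Fin m ⊕ Fin m) (Fin m ⊕ Fin m) ℂ}
    (hA : A ∈ Skew (Fin m ⊕ Fin m)) (hfix : tau m A = A) :
    -(A * Jmat m) ∈ quatMatrices m ⊓ hermMatrices' (Fin m ⊕ Fin m)
      ∧ -(A * Jmat m) * Jmat m = A := by
  have hA' : Aᵀ = -A := hA
  have hmulJ : -(A * Jmat m) * Jmat m = A := by
    calc -(A * Jmat m) * Jmat m = -(A * (Jmat m * Jmat m)) := by noncomm_ring
      _ = A := by rw [Jmat_mul_Jmat]; noncomm_ring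
  have hTeq : -(A * Jmat m) = Jmat m * Aᴴ := by
    have h2 : Jmat m * Aᴴ * (Jmat m * Jmat m) = A * Jmat m := by
      rw [← Matrix.mul_assoc]
      unfold tau at hfix
      rw [hfix]
    rw [Jmat_mul_Jmat] at h2
    have h3 : -(Jmat m * Aᴴ) = A * Jmat m := by rw [← h2]; noncomm_ring
    rw [← h3]; exact neg_neg _
  refine ⟨Submodule.mem_inf.mpr ⟨(mem_quat_iff _).mpr ?_, ?_⟩, hmulJ⟩
  · -- quaternionic: T * J = J * Cj T  where T = -(A * J)
    have hCjAH : Cj (Aᴴ) = -A := by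
      rw [conjTranspose_eq_Cj_transpose, Cj_transpose, Cj_Cj, hA']
    rw [hmulJ, hTeq, Cj_mul, Cj_Jmat, hCjAH, ← Matrix.mul_assoc, Jmat_mul_Jmat]
    noncomm_ring
  · -- hermitian
    rw [mem_herm_iff, hTeq, Matrix.conjTranspose_mul, Jmat_conjTranspose,
      Matrix.conjTranspose_conjTranspose]
    calc A * -Jmat m = -(A * Jmat m) := by noncomm_ring
      _ = Jmat m * Aᴴ := hTeq

end VStuff

section Transfer

variable (m : ℕ)

lemma tau_sub (A B : Matrix (Fin m ⊕ Fin m) (Fin m ⊕ Fin m) ℂ) :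
    tau m (A - B) = tau m A - tau m B := by
  simp [tau, Matrix.conjTranspose_sub, Matrix.mul_sub, Matrix.sub_mul]

noncomputable def psiV :
    ↥(quatMatrices m ⊓ hermMatrices' (Fin m ⊕ Fin m)) →ₗ[ℝ] ↥(Skew (Fin m ⊕ Fin m)) where
  toFun T := ⟨T.1 * Jmat m, memV_skew T.2⟩
  map_add' a b := by
    apply Subtype.ext
    show (a.1 + b.1) * Jmat m = a.1 * Jmat m + b.1 * Jmat m
    rw [Matrix.add_mul]
  map_smul' r a := by
    apply Subtype.ext
    show (r • a.1) * Jmat m = r • (a.1 * Jmat m)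
    rw [Matrix.smul_mul]

lemma psiV_apply (T : ↥(quatMatrices m ⊓ hermMatrices' (Fin m ⊕ Fin m))) :
    (psiV m T : Matrix (Fin m ⊕ Fin m) (Fin m ⊕ Fin m) ℂ) = T.1 * Jmat m := rfl

noncomputable def bV :
    Module.Basis (Fin (Module.finrank ℝ ↥(quatMatrices m ⊓ hermMatrices' (Fin m ⊕ Fin m)))) ℝ
      ↥(quatMatrices m ⊓ hermMatrices' (Fin m ⊕ Fin m)) :=
  Module.finBasis ℝ _

lemma real_smul_mat (r : ℝ) (M : Matrix (Fin m ⊕ Fin m) (Fin m ⊕ Fin m) ℂ) :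
    r • M = (r : ℂ) • M := (algebraMap_smul ℂ r M).symm

lemma psiV_linearIndependent :
    LinearIndependent ℂ (fun i => psiV m (bV m i)) := by
  rw [Fintype.linearIndependent_iff]
  intro g hg
  have hg' : (∑ i, g i • ((bV m i).1 * Jmat m)) = 0 := by
    have h2 := congrArg (Submodule.subtype _) hg
    simpa [psiV_apply, Submodule.coe_sum] using h2
  set X : ↥(quatMatrices m ⊓ hermMatrices' (Fin m ⊕ Fin m)) := ∑ i, (g i).re • bV m i with hX
  set Y : ↥(quatMatrices m ⊓ hermMatrices' (Fin m ⊕ Fin m)) := ∑ i, (g i).im • bV m i with hY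
  have hXv : (X : Matrix (Fin m ⊕ Fin m) (Fin m ⊕ Fin m) ℂ) = ∑ i, (g i).re • (bV m i).1 := by
    rw [hX, Submodule.coe_sum]
    simp only [SetLike.val_smul]
  have hYv : (Y : Matrix (Fin m ⊕ Fin m) (Fin m ⊕ Fin m) ℂ) = ∑ i, (g i).im • (bV m i).1 := by
    rw [hY, Submodule.coe_sum]
    simp only [SetLike.val_smul]
  have hsplit : X.1 * Jmat m + Complex.I • (Y.1 * Jmat m)
      = ∑ i, g i • ((bV m i).1 * Jmat m) := by
    rw [hXv, hYv, Finset.sum_mul, Finset.sum_mul, Finset.smul_sum, ← Finset.sum_add_distrib]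
    apply Finset.sum_congr rfl
    intro i _
    rw [Matrix.smul_mul, Matrix.smul_mul, real_smul_mat, real_smul_mat, smul_smul, ← add_smul]
    congr 1
    rw [mul_comm]
    exact Complex.re_add_im (g i)
  have h0 : X.1 * Jmat m + Complex.I • (Y.1 * Jmat m) = 0 := by rw [hsplit, hg']
  have hXfix : tau m (X.1 * Jmat m) = X.1 * Jmat m := tau_fixed_of_memV X.2
  have hYfix : tau m (Y.1 * Jmat m) = Y.1 * Jmat m := tau_fixed_of_memV Y.2
  have h0' : X.1 * Jmat m + (-Complex.I) • (Y.1 * Jmat m) = 0 := by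
    have h2 := congrArg (tau m) h0
    rw [tau_add, tau_smul, hXfix, hYfix, Complex.conj_I] at h2
    rw [h2]
    simp [tau]
  have hXJ : X.1 * Jmat m = 0 := by
    have h2 : X.1 * Jmat m + X.1 * Jmat m = 0 := by
      calc X.1 * Jmat m + X.1 * Jmat m
          = (X.1 * Jmat m + Complex.I • (Y.1 * Jmat m))
            + (X.1 * Jmat m + (-Complex.I) • (Y.1 * Jmat m)) := by module
        _ = 0 + 0 := by rw [h0, h0']
        _ = 0 := by rw [add_zero]
    have h3 : (2 : ℂ) • (X.1 * Jmat m) = 0 := by rw [two_smul]; exact h2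
    exact (smul_eq_zero.mp h3).resolve_left (by norm_num)
  have hYJ : Y.1 * Jmat m = 0 := by
    have h2 : Complex.I • (Y.1 * Jmat m) = 0 := by
      have h3 := h0
      rw [hXJ, zero_add] at h3
      exact h3
    have h4 := smul_eq_zero.mp h2
    rcases h4 with h4 | h4
    · exact absurd h4 Complex.I_ne_zero
    · exact h4
  have hXzero : X = 0 := by
    apply Subtype.ext
    show X.1 = 0
    calc X.1 = -(X.1 * (Jmat m * Jmat m)) := by rw [Jmat_mul_Jmat]; noncomm_ring
      _ = -(X.1 * Jmat m * Jmat m) := by rw [Matrix.mul_assoc]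
      _ = 0 := by rw [hXJ]; simp
  have hYzero : Y = 0 := by
    apply Subtype.ext
    show Y.1 = 0
    calc Y.1 = -(Y.1 * (Jmat m * Jmat m)) := by rw [Jmat_mul_Jmat]; noncomm_ring
      _ = -(Y.1 * Jmat m * Jmat m) := by rw [Matrix.mul_assoc]
      _ = 0 := by rw [hYJ]; simp
  have hbli := (bV m).linearIndependent
  rw [Fintype.linearIndependent_iff] at hbli
  intro i
  have hre : (g i).re = 0 := hbli (fun k => (g k).re) (by rw [← hX, hXzero]) i
  have him : (g i).im = 0 := hbli (fun k => (g k).im) (by rw [← hY, hYzero]) i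
  exact Complex.ext hre him

lemma psiV_mem_span (T : ↥(quatMatrices m ⊓ hermMatrices' (Fin m ⊕ Fin m))) :
    psiV m T ∈ Submodule.span ℂ (Set.range (fun i => psiV m (bV m i))) := by
  have hT : psiV m T = ∑ k, (bV m).repr T k • psiV m (bV m k) := by
    conv_lhs => rw [← Module.Basis.sum_repr (bV m) T]
    rw [map_sum]
    simp only [_root_.map_smul]
  rw [hT]
  apply Submodule.sum_mem
  intro k _
  rw [← algebraMap_smul ℂ ((bV m).repr T k) (psiV m (bV m k))]
  exact Submodule.smul_mem _ _ (Submodule.subset_span ⟨k, rfl⟩)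

lemma psiV_span :
    ⊤ ≤ Submodule.span ℂ (Set.range (fun i => psiV m (bV m i))) := by
  rintro ⟨A, hA⟩ -
  set A1 : Matrix (Fin m ⊕ Fin m) (Fin m ⊕ Fin m) ℂ := (1/2 : ℂ) • (A + tau m A) with hA1
  set A2 : Matrix (Fin m ⊕ Fin m) (Fin m ⊕ Fin m) ℂ
    := (Complex.I/2 : ℂ) • (tau m A - A) with hA2
  have hA1skew : A1 ∈ Skew (Fin m ⊕ Fin m) :=
    Submodule.smul_mem _ _ (Submodule.add_mem _ hA (tau_skew hA))
  have hA2skew : A2 ∈ Skew (Fin m ⊕ Fin m) :=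
    Submodule.smul_mem _ _ (Submodule.sub_mem _ (tau_skew hA) hA)
  have hA1fix : tau m A1 = A1 := by
    rw [hA1, tau_smul, tau_add, tau_tau]
    have : (starRingEnd ℂ) (1/2 : ℂ) = (1/2 : ℂ) := by
      rw [show (1/2 : ℂ) = ((1/2 : ℝ) : ℂ) by norm_num, Complex.conj_ofReal]
    rw [this, add_comm]
  have hA2fix : tau m A2 = A2 := by
    rw [hA2, tau_smul, tau_sub, tau_tau]
    have : (starRingEnd ℂ) (Complex.I/2 : ℂ) = -(Complex.I/2) := by
      rw [map_div₀, Complex.conj_I,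
        show (starRingEnd ℂ) (2 : ℂ) = 2 by
          rw [show (2 : ℂ) = ((2 : ℝ) : ℂ) by norm_num, Complex.conj_ofReal],
        neg_div]
    rw [this, neg_smul, smul_sub, smul_sub, neg_sub]
  have hdecomp : A = A1 + Complex.I • A2 := by
    have hII : Complex.I * (Complex.I / 2) = -(1/2 : ℂ) := by
      rw [mul_div_assoc', Complex.I_mul_I]
      norm_num
    rw [hA1, hA2, smul_smul, hII]
    module
  obtain ⟨hT1mem, hT1J⟩ := memV_of_tau_fixed hA1skew hA1fix
  obtain ⟨hT2mem, hT2J⟩ := memV_of_tau_fixed hA2skew hA2fix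
  have hrepr : (⟨A, hA⟩ : ↥(Skew (Fin m ⊕ Fin m)))
      = psiV m ⟨-(A1 * Jmat m), hT1mem⟩ + Complex.I • psiV m ⟨-(A2 * Jmat m), hT2mem⟩ := by
    apply Subtype.ext
    show A = -(A1 * Jmat m) * Jmat m + Complex.I • (-(A2 * Jmat m) * Jmat m)
    rw [hT1J, hT2J]
    exact hdecomp
  rw [hrepr]
  exact Submodule.add_mem _ (psiV_mem_span m _)
    (Submodule.smul_mem _ _ (psiV_mem_span m _))

noncomputable def cB :
    Module.Basis (Fin (Module.finrank ℝ ↥(quatMatrices m ⊓ hermMatrices' (Fin m ⊕ Fin m)))) ℂ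
      ↥(Skew (Fin m ⊕ Fin m)) :=
  Module.Basis.mk (psiV_linearIndependent m) (psiV_span m)

lemma cB_apply (i) : cB m i = psiV m (bV m i) := Module.Basis.mk_apply _ _ _

end Transfer

end Stmt15Aux

open Stmt15Aux

/-- For `S` a Hermitian quaternion-type complex `2m × 2m` matrix, the map
`T ↦ S·T·S` maps the space `V'` of Hermitian quaternion-type matrices to itself, and its
determinant as an ℝ-linear endomorphism of `V'` equals `(det S)^(2m-1)`. -/
theorem stmt_15 (m : ℕ) (hm : 1 ≤ m)
    (S : Matrix (Fin m ⊕ Fin m) (Fin m ⊕ Fin m) ℂ)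
    (hS : S ∈ quatMatrices m ⊓ hermMatrices' (Fin m ⊕ Fin m)) :
    (∀ T ∈ quatMatrices m ⊓ hermMatrices' (Fin m ⊕ Fin m),
      S * T * S ∈ quatMatrices m ⊓ hermMatrices' (Fin m ⊕ Fin m))
    ∧ ∀ P : ↥(quatMatrices m ⊓ hermMatrices' (Fin m ⊕ Fin m)) →ₗ[ℝ]
          ↥(quatMatrices m ⊓ hermMatrices' (Fin m ⊕ Fin m)),
        (∀ T : ↥(quatMatrices m ⊓ hermMatrices' (Fin m ⊕ Fin m)),
          (P T : Matrix (Fin m ⊕ Fin m) (Fin m ⊕ Fin m) ℂ)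
            = S * (T : Matrix (Fin m ⊕ Fin m) (Fin m ⊕ Fin m) ℂ) * S) →
        ((LinearMap.det P : ℝ) : ℂ) = S.det ^ (2 * m - 1) := by
  constructor
  · intro T hT
    exact closure hS hT
  · intro P hP
    have hSJ : S * Jmat m = Jmat m * Sᵀ := memV_mulJ hS
    have hinter : ∀ T, congrMap S (psiV m T) = psiV m (P T) := by
      intro T
      apply Subtype.ext
      rw [psiV_apply]
      show S * (T.1 * Jmat m) * Sᵀ = (P T).1 * Jmat m
      rw [hP T]
      simp only [Matrix.mul_assoc]
      rw [← hSJ]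
    have hmat : LinearMap.toMatrix (cB m) (cB m) (congrMap S)
        = (LinearMap.toMatrix (bV m) (bV m) P).map (algebraMap ℝ ℂ) := by
      ext i j
      rw [Matrix.map_apply, LinearMap.toMatrix_apply, LinearMap.toMatrix_apply,
        cB_apply, hinter]
      have hw : psiV m (P (bV m j))
          = ∑ k, algebraMap ℝ ℂ ((bV m).repr (P (bV m j)) k) • cB m k := by
        conv_lhs => rw [← Module.Basis.sum_repr (bV m) (P (bV m j))]
        rw [map_sum]
        apply Finset.sum_congr rfl
        intro k _
        rw [_root_.map_smul, ← cB_apply]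
        exact (algebraMap_smul ℂ _ _).symm
      rw [hw, map_sum]
      simp only [_root_.map_smul, Module.Basis.repr_self]
      rw [Finsupp.finset_sum_apply]
      simp [Finsupp.smul_single, Finsupp.single_apply]
    have hdet2 : algebraMap ℝ ℂ (LinearMap.det P) = LinearMap.det (congrMap S) := by
      rw [← LinearMap.det_toMatrix (bV m) P, RingHom.map_det, RingHom.mapMatrix_apply,
        ← hmat, LinearMap.det_toMatrix]
    have hfin := det_congrMap_of_herm
      (finSumFinEquiv.trans (finCongr (two_mul m).symm)) S (memV_herm hS)
    calc ((LinearMap.det P : ℝ) : ℂ) = algebraMap ℝ ℂ (LinearMap.det P) := rfl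
      _ = LinearMap.det (congrMap S) := hdet2
      _ = S.det ^ (2 * m - 1) := hfin
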